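/- Let Γ be a connected graph and G ≤ Aut(Γ) act transitively on both vertices and edges, with N ⊴ G nontrivial and vertex-intransitive. Then no edge of Γ joins two vertices lying in the same N-orbit. -/

import Mathlib

open MulAction

/-- The normal quotient graph: vertices are the `N`-orbits, two distinct orbits
being adjacent when some vertex of one is adjacent in `Γ` to some vertex of the other. -/
def quotientGraph {V G : Type*} (Γ : SimpleGraph V) [Group G] [MulAction G V]
    (N : Subgroup G) : SimpleGraph (Quotient (orbitRel N V)) where
  Adj X Y := X ≠ Y ∧ ∃ x y : V, Quotient.mk (orbitRel N V) x = X ∧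
    Quotient.mk (orbitRel N V) y = Y ∧ Γ.Adj x y
  symm := by
    constructor
    rintro X Y ⟨hne, x, y, hx, hy, hxy⟩
    exact ⟨hne.symm, y, x, hy, hx, hxy.symm⟩
  loopless := by constructor; rintro X ⟨h, -⟩; exact h rfl

/-- If `G` is vertex- and edge-transitive on a connected graph `Γ` and `N ⊴ G` is
nontrivial and vertex-intransitive, then no edge of `Γ` joins two vertices of the
same `N`-orbit. -/
theorem stmt4 {V G : Type*} [Fintype V] [Group G] [MulAction G V]
    (Γ : SimpleGraph V)
    (hact : ∀ (g : G) (u v : V), Γ.Adj (g • u) (g • v) ↔ Γ.Adj u v)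
    (hconn : Γ.Connected)
    (hvtrans : MulAction.IsPretransitive G V)
    (hedge : ∀ u v x y : V, Γ.Adj u v → Γ.Adj x y →
      ∃ g : G, (g • u = x ∧ g • v = y) ∨ (g • u = y ∧ g • v = x))
    (N : Subgroup G) (hN : N.Normal) (hNbot : N ≠ ⊥)
    (hNintrans : ¬ MulAction.IsPretransitive N V) :
    ∀ x y : V, Quotient.mk (orbitRel N V) x = Quotient.mk (orbitRel N V) y →
      ¬ Γ.Adj x y := by

  intro x y hxy hadj
  have hrel0 : (orbitRel N V) x y := Quotient.eq''.mp hxy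
  have hconj : ∀ (g : G) (a b : V), (orbitRel N V) a b →
      (orbitRel N V) (g • a) (g • b) := by
    intro g a b hab
    obtain ⟨n, hn⟩ := hab
    refine ⟨⟨g * n * g⁻¹, hN.conj_mem n n.2 g⟩, ?_⟩
    show (g * (n : G) * g⁻¹) • (g • b) = g • a
    rw [← hn]
    simp [mul_smul, Subgroup.smul_def]
  have hedgerel : ∀ u v, Γ.Adj u v → (orbitRel N V) u v := by
    intro u v huv
    obtain ⟨g, ⟨h1, h2⟩ | ⟨h1, h2⟩⟩ := hedge x y u v hadj huv
    · rw [← h1, ← h2]; exact hconj g x y hrel0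
    · rw [← h1, ← h2]; exact (orbitRel N V).symm' (hconj g x y hrel0)
  have hall : ∀ a b : V, (orbitRel N V) a b := by
    intro a b
    obtain ⟨w⟩ := hconn a b
    induction w with
    | nil => exact (orbitRel N V).refl' _
    | cons h p ih => exact (orbitRel N V).trans' (hedgerel _ _ h) ih
  apply hNintrans
  constructor
  intro a b
  obtain ⟨n, hn⟩ := hall b a
  exact ⟨n, hn⟩
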